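/- arXiv:1305.2088 — 4 statements merged into one kernel-verified Lean document; each statement's English description precedes it below -/
import Mathlib

section
/- Let r_k = C(2k,k)/((2k−1)·4^k) for integers k ≥ 1, and define r_{1+} = 1 and r_{k+} = 2k·r_k for k ≥ 2. Then r_{k+} = ∏_{j=1}^{k−1} (1 − 1/(2j)) for k ≥ 2, r_{k+} − r_{(k+1)+} = r_k for all k ≥ 1, and consequently r_{k+} = Σ_{ℓ=k}^∞ r_ℓ for all k ≥ 1; in particular Σ_{k=1}^∞ r_k = 1. -/
open Filter

/-- `r_k = C(2k, k) / ((2k - 1) · 4^k)`. -/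
noncomputable def rCF (k : ℕ) : ℝ :=
  (Nat.choose (2 * k) k : ℝ) / ((2 * (k : ℝ) - 1) * 4 ^ k)

/-- `r_{1+} = 1` and `r_{k+} = 2k · r_k` for `k ≥ 2`. -/
noncomputable def rCFplus (k : ℕ) : ℝ := if k = 1 then 1 else 2 * (k : ℝ) * rCF k

lemma rCF_pos {k : ℕ} (hk : 1 ≤ k) : 0 < rCF k := by
  have hk' : (1 : ℝ) ≤ (k : ℝ) := by exact_mod_cast hk
  apply div_pos
  · exact_mod_cast Nat.choose_pos (by omega)
  · apply mul_pos (by linarith) (by positivity)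

lemma rCF_one : rCF 1 = 1 / 2 := by simp [rCF]; norm_num

lemma rCFplus_eq {k : ℕ} (hk : 1 ≤ k) : rCFplus k = 2 * (k : ℝ) * rCF k := by
  rcases eq_or_lt_of_le hk with h | h
  · simp [rCFplus, ← h, rCF_one]
  · rw [rCFplus, if_neg (by omega)]

lemma rCFplus_pos {k : ℕ} (hk : 1 ≤ k) : 0 < rCFplus k := by
  rw [rCFplus_eq hk]
  have : (1 : ℝ) ≤ (k : ℝ) := by exact_mod_cast hk
  have := rCF_pos hk
  nlinarith

lemma rCFplus_succ {k : ℕ} (hk : 1 ≤ k) : rCFplus (k + 1) = (2 * (k : ℝ) - 1) * rCF k := by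
  have hk' : (1 : ℝ) ≤ (k : ℝ) := by exact_mod_cast hk
  have hrec := Nat.succ_mul_centralBinom_succ k
  have hrecR : ((k : ℝ) + 1) * (Nat.choose (2 * (k + 1)) (k + 1) : ℝ)
      = 2 * (2 * (k : ℝ) + 1) * (Nat.choose (2 * k) k : ℝ) := by
    simp only [Nat.centralBinom] at hrec
    exact_mod_cast hrec
  rw [rCFplus_eq (by omega : 1 ≤ k + 1), rCF, rCF]
  have h1 : (2 * ((k : ℝ) + 1) - 1) ≠ 0 := by push_cast; nlinarith
  have h2 : (2 * (k : ℝ) - 1) ≠ 0 := by nlinarith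
  have h4 : (4 : ℝ) ^ (k + 1) ≠ 0 := by positivity
  have h4' : (4 : ℝ) ^ k ≠ 0 := by positivity
  push_cast
  field_simp
  linear_combination (2 * 4 ^ k) * hrecR

lemma rCFplus_diff {k : ℕ} (hk : 1 ≤ k) : rCFplus k - rCFplus (k + 1) = rCF k := by
  rw [rCFplus_eq hk, rCFplus_succ hk]; ring

lemma rCFplus_prod : ∀ k : ℕ, 2 ≤ k →
    rCFplus k = ∏ j ∈ Finset.Icc 1 (k - 1), (1 - 1 / (2 * (j : ℝ))) := by
  intro k hk
  induction k with
  | zero => omega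
  | succ n ih =>
    rcases Nat.lt_or_ge n 2 with h | h
    · interval_cases n
      · omega
      · simp [rCFplus, rCF]
        norm_num [Nat.choose]
    · have hn1 : 1 ≤ n := by omega
      have hn' : (1 : ℝ) ≤ (n : ℝ) := by exact_mod_cast hn1
      rw [show n + 1 - 1 = n from rfl]
      rw [show n = (n - 1) + 1 from by omega, Finset.prod_Icc_succ_top (by omega)]
      rw [show (n - 1) + 1 = n from by omega, ← ih h]
      rw [rCFplus_succ hn1, rCFplus_eq hn1]
      push_cast
      field_simp

lemma rCFplus_sq_le : ∀ m : ℕ, 1 ≤ m → (2 * (m : ℝ) - 1) * rCFplus m ^ 2 ≤ 1 := by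
  intro m hm
  induction m, hm using Nat.le_induction with
  | base => norm_num [rCFplus]
  | succ n hn ih =>
    have hn' : (1 : ℝ) ≤ (n : ℝ) := by exact_mod_cast hn
    have hx : 0 < rCFplus n := rCFplus_pos hn
    have hstep : rCFplus (n + 1) * (2 * (n : ℝ)) = rCFplus n * (2 * (n : ℝ) - 1) := by
      rw [rCFplus_succ hn, rCFplus_eq hn]; ring
    have hsq : rCFplus (n+1) ^ 2 * (2 * (n:ℝ)) ^ 2 = rCFplus n ^ 2 * (2 * (n:ℝ) - 1) ^ 2 := by
      have := congrArg (fun x : ℝ => x ^ 2) hstep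
      simpa [mul_pow] using this
    have hfac : (0:ℝ) ≤ (2 * (n:ℝ) + 1) * (2 * (n:ℝ) - 1) := by nlinarith
    have hint := mul_le_mul_of_nonneg_left ih hfac
    have h4n : (0:ℝ) < 4 * (n:ℝ) ^ 2 := by positivity
    have key : ((2 * (n:ℝ) + 1) * rCFplus (n+1) ^ 2) * (4 * (n:ℝ) ^ 2) ≤ 1 * (4 * (n:ℝ) ^ 2) := by
      nlinarith [hsq, hint]
    have := le_of_mul_le_mul_right key h4n
    push_cast
    linarith

lemma rCFplus_tendsto : Tendsto rCFplus atTop (nhds 0) := by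
  have hb : ∀ m : ℕ, 1 ≤ m → rCFplus m ≤ Real.sqrt (1 / (2 * (m : ℝ) - 1)) := by
    intro m hm
    have hm' : (1 : ℝ) ≤ (m : ℝ) := by exact_mod_cast hm
    have h1 := rCFplus_sq_le m hm
    have hpos : (0 : ℝ) < 2 * (m : ℝ) - 1 := by linarith
    have h2 : rCFplus m ^ 2 ≤ 1 / (2 * (m : ℝ) - 1) := by
      rw [le_div_iff₀ hpos]; linarith [h1]
    calc rCFplus m = Real.sqrt (rCFplus m ^ 2) := by
          rw [Real.sqrt_sq (rCFplus_pos hm).le]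
      _ ≤ Real.sqrt (1 / (2 * (m : ℝ) - 1)) := Real.sqrt_le_sqrt h2
  have htop : Tendsto (fun m : ℕ => 2 * (m : ℝ) - 1) atTop atTop := by
    apply Tendsto.atTop_add _ tendsto_const_nhds
    exact Tendsto.const_mul_atTop (by norm_num) tendsto_natCast_atTop_atTop
  have h0 : Tendsto (fun m : ℕ => Real.sqrt (1 / (2 * (m : ℝ) - 1))) atTop (nhds 0) := by
    have := htop.inv_tendsto_atTop
    have hsq : Tendsto Real.sqrt (nhds 0) (nhds 0) := by
      simpa using (Real.continuous_sqrt.tendsto 0)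
    exact hsq.comp (by simpa [one_div, Pi.inv_def] using this)
  apply squeeze_zero' (g := fun m : ℕ => Real.sqrt (1 / (2 * (m : ℝ) - 1)))
  · filter_upwards [eventually_ge_atTop 1] with m hm
    exact (rCFplus_pos hm).le
  · filter_upwards [eventually_ge_atTop 1] with m hm
    exact hb m hm
  · exact h0

lemma rCF_hasSum {k : ℕ} (hk : 1 ≤ k) :
    HasSum (fun ℓ : ℕ => rCF (k + ℓ)) (rCFplus k) := by
  have hpart : ∀ n : ℕ, ∑ ℓ ∈ Finset.range n, rCF (k + ℓ) = rCFplus k - rCFplus (k + n) := by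
    intro n
    induction n with
    | zero => simp
    | succ m ih =>
      rw [Finset.sum_range_succ, ih, ← rCFplus_diff (show 1 ≤ k + m by omega)]
      ring_nf
  have hsummable : Summable (fun ℓ : ℕ => rCF (k + ℓ)) := by
    apply summable_of_sum_range_le (c := rCFplus k)
    · intro ℓ; exact (rCF_pos (by omega)).le
    · intro n
      rw [hpart n]
      have := rCFplus_pos (show 1 ≤ k + n by omega)
      linarith
  rw [hsummable.hasSum_iff_tendsto_nat]
  simp only [hpart]
  have : Tendsto (fun n : ℕ => rCFplus (k + n)) atTop (nhds 0) := by
    have := rCFplus_tendsto.comp (tendsto_add_atTop_nat k)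
    simpa [Function.comp_def, add_comm] using this
  simpa using tendsto_const_nhds.sub this

theorem rCFplus_identities :
    (∀ k : ℕ, 2 ≤ k →
      rCFplus k = ∏ j ∈ Finset.Icc 1 (k - 1), (1 - 1 / (2 * (j : ℝ)))) ∧
    (∀ k : ℕ, 1 ≤ k → rCFplus k - rCFplus (k + 1) = rCF k) ∧
    (∀ k : ℕ, 1 ≤ k → HasSum (fun ℓ : ℕ => rCF (k + ℓ)) (rCFplus k)) ∧
    HasSum (fun k : ℕ => rCF (k + 1)) 1 := by
  refine ⟨rCFplus_prod, fun k hk => rCFplus_diff hk, fun k hk => rCF_hasSum hk, ?_⟩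
  have := rCF_hasSum (k := 1) le_rfl
  simpa [rCFplus, add_comm] using this
end

section
/- Let r_k = C(2k,k)/((2k−1)·4^k) for integers k ≥ 1. Then as k → ∞, r_k = (1/(2√π))·k^{−3/2} + O(k^{−5/2}); that is, there exists a constant C > 0 such that |r_k − (1/(2√π))·k^{−3/2}| ≤ C·k^{−5/2} for all k ≥ 1. -/
set_option maxHeartbeats 1000000 in
theorem rCF_asymptotics :
    ∃ C : ℝ, 0 < C ∧ ∀ k : ℕ, 1 ≤ k →
      |rCF k - 1 / (2 * Real.sqrt Real.pi) * (k : ℝ) ^ (-(3 : ℝ) / 2)|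
        ≤ C * (k : ℝ) ^ (-(5 : ℝ) / 2) := by
  refine ⟨1, one_pos, fun k hk => ?_⟩
  have hK1 : (1:ℝ) ≤ (k:ℝ) := by exact_mod_cast hk
  set K : ℝ := (k : ℝ) with hKdef
  have hK0 : (0:ℝ) < K := by linarith
  set a : ℝ := ((2*k).choose k : ℝ) / 4 ^ k with ha
  have h4 : (0:ℝ) < (4:ℝ) ^ k := by positivity
  have hkle : k ≤ 2 * k := by omega
  have hfk : (0:ℝ) < (Nat.factorial k : ℝ) := by exact_mod_cast Nat.factorial_pos k
  have hf2k : (0:ℝ) < (Nat.factorial (2*k) : ℝ) := by exact_mod_cast Nat.factorial_pos (2*k)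
  have hchn : ((2*k).choose k : ℝ) * ((Nat.factorial k : ℝ) * (Nat.factorial k : ℝ)) = (Nat.factorial (2*k) : ℝ) := by
    have h := Nat.choose_mul_factorial_mul_factorial hkle
    rw [show 2*k - k = k by omega] at h
    exact_mod_cast by rw [← h]; ring
  have hapos : 0 < a := by
    have : 0 < ((2*k).choose k : ℝ) := by exact_mod_cast Nat.choose_pos hkle
    positivity
  have h2pow : (2:ℝ) ^ (4*k) = 4 ^ k * 4 ^ k := by
    rw [show (4:ℝ) = 2^2 by norm_num, ← pow_mul, ← pow_add]
    congr 1
    omega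
  have hW : Real.Wallis.W k * (a^2 * (2*K+1)) = 1 := by
    rw [Real.Wallis.W_eq_factorial_ratio, h2pow, ha, hKdef]
    field_simp
    linear_combination
      (((2*k).choose k : ℝ) * ((Nat.factorial k : ℝ) * (Nat.factorial k : ℝ))
        + (Nat.factorial (2*k) : ℝ)) * hchn
  have hWle := Real.Wallis.W_le k
  have hleW := Real.Wallis.le_W k
  have hWpos := Real.Wallis.W_pos k
  have hπ := Real.pi_gt_three
  have hpos : (0:ℝ) < a^2*(2*K+1) := by positivity
  have hA : 2 ≤ Real.pi * (a^2 * (2*K+1)) := by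
    have h2 := mul_le_mul_of_nonneg_right hWle hpos.le
    rw [hW] at h2
    nlinarith [h2]
  have hB : Real.pi * (a^2 * (2*K+1)^2) ≤ 2*(2*K+2) := by
    have hleW' : (2*K+1) * (Real.pi/2) ≤ Real.Wallis.W k * (2*K+2) := by
      rw [div_mul_eq_mul_div, div_le_iff₀ (by positivity : (0:ℝ) < 2*(k:ℝ)+2)] at hleW
      rw [hKdef]; linarith [hleW]
    have h2 := mul_le_mul_of_nonneg_right hleW' hpos.le
    rw [mul_right_comm (Real.Wallis.W k), hW, one_mul] at h2
    nlinarith [h2]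
  clear hW hWle hleW hWpos hchn hfk hf2k h2pow h4 hpos
  clear_value a K
  set p : ℝ := Real.sqrt Real.pi with hpdef
  set s : ℝ := Real.sqrt K with hsdef
  have hp0 : 0 < p := Real.sqrt_pos.mpr Real.pi_pos
  have hs0 : 0 < s := Real.sqrt_pos.mpr hK0
  have hp2 : p^2 = Real.pi := Real.sq_sqrt Real.pi_pos.le
  have hs2 : s^2 = K := Real.sq_sqrt hK0.le
  have hp1 : 1 < p := by nlinarith [Real.pi_gt_three]
  clear_value p s
  set u : ℝ := a * p * s with hu
  have hu0 : 0 < u := by positivity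
  clear_value u
  have hu2sq : u^2 = Real.pi * a^2 * K := by
    rw [hu, mul_pow, mul_pow, hp2, hs2]; ring
  have hu2 : 2*K ≤ u^2 * (2*K+1) := by
    have h := mul_le_mul_of_nonneg_right hA hK0.le
    rw [hu2sq]; nlinarith [h]
  have husq1 : u^2 ≤ 1 := by
    have h1 : u^2 * (2*K+1)^2 ≤ 1 * (2*K+1)^2 := by
      have h := mul_le_mul_of_nonneg_right hB hK0.le
      rw [hu2sq]; nlinarith [h]
    exact le_of_mul_le_mul_right h1 (by positivity)
  have hule : u ≤ 1 := by nlinarith [husq1, sq_nonneg (u-1)]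
  have huu : u^2 ≤ u := by nlinarith [mul_le_mul_of_nonneg_left hule hu0.le]
  have huge : 2*K - 1 ≤ 2*K*u := by
    nlinarith [hu2, husq1, mul_le_mul_of_nonneg_left huu (by linarith : (0:ℝ) ≤ 2*K)]
  -- rewrite rpow
  have h32 : K ^ (-(3:ℝ)/2) = 1/(K*s) := by
    rw [show (-(3:ℝ)/2) = -(1 + 1/2) by ring, Real.rpow_neg hK0.le, Real.rpow_add hK0,
      Real.rpow_one, ← Real.sqrt_eq_rpow, ← hsdef, one_div]
  have h52 : K ^ (-(5:ℝ)/2) = 1/(K^2*s) := by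
    rw [show (-(5:ℝ)/2) = -(2 + 1/2) by ring, Real.rpow_neg hK0.le, Real.rpow_add hK0,
      ← Real.sqrt_eq_rpow, show ((2:ℝ)) = ((2:ℕ):ℝ) by norm_num, Real.rpow_natCast, ← hsdef, one_div]
  have hrCF : rCF k = a / (2*K - 1) := by
    rw [rCF, ← hKdef, ha, div_div, mul_comm (2*K-1)]
  have h2K1 : (0:ℝ) < 2*K - 1 := by linarith
  rw [hrCF, h32, h52, one_mul]
  have hne1 : (2*K-1) ≠ 0 := ne_of_gt h2K1
  have hnep : p ≠ 0 := ne_of_gt hp0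
  have hnes : s ≠ 0 := ne_of_gt hs0
  have hneK : K ≠ 0 := ne_of_gt hK0
  have expand : a/(2*K-1) - 1/(2*p)*(1/(K*s))
      = (2*(a*p*s)*K^2 - K*(2*K-1)) / ((2*K-1)*(2*p)*(K^2*s)) := by
    field_simp
  rw [expand, abs_div, abs_of_pos (by positivity : (0:ℝ) < (2*K-1)*(2*p)*(K^2*s)),
    div_le_div_iff₀ (by positivity) (by positivity)]
  have hnum : |2*(a*p*s)*K^2 - K*(2*K-1)| ≤ (2*K-1)*(2*p) := by
    rw [abs_le]
    constructor
    · nlinarith [mul_le_mul_of_nonneg_left huge hK0.le, hp1, hK1, h2K1]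
    · nlinarith [mul_le_mul_of_nonneg_left hule (sq_nonneg K), hp1, hK1]
  nlinarith [mul_le_mul_of_nonneg_right hnum (by positivity : (0:ℝ) ≤ K^2*s)]
end

section
/- Let (Y_n)_{n≥1} be a sequence of nonnegative random variables on a probability space (Ω, P) and set S_n = Σ_{k=1}^n Y_k. Suppose E[S_n] → ∞ as n → ∞, sup_{n≥1} E[Y_n] < ∞, and there exist δ > 0 and C > 0 such that Var(S_n) ≤ C·(E[S_n])^{2−δ} for all sufficiently large n. Then lim_{n→∞} S_n/E[S_n] = 1 almost surely. -/
open MeasureTheory ProbabilityTheory Filter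

set_option maxHeartbeats 1600000 in
private lemma SLLN_aux
    {Ω : Type*} [MeasurableSpace Ω] (P : Measure Ω) [IsProbabilityMeasure P]
    (S : ℕ → Ω → ℝ) (a : ℕ → ℝ) (M δ C : ℝ)
    (hmemS : ∀ n, MemLp (S n) 2 P)
    (hSmono : ∀ ω, Monotone (fun n => S n ω))
    (hSnonneg : ∀ n ω, 0 ≤ S n ω)
    (ha : ∀ n, a n = ∫ ω, S n ω ∂P)
    (ha0 : a 0 = 0)
    (haT : Tendsto a atTop atTop)
    (hM : 0 ≤ M)
    (hstep : ∀ n, a (n + 1) ≤ a n + M)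
    (hδ : 0 < δ) (hδ1 : δ ≤ 1) (hC : 0 < C)
    (hvar : ∀ᶠ n in atTop, variance (S n) P ≤ C * a n ^ (2 - δ)) :
    ∀ᵐ ω ∂P, Tendsto (fun n => S n ω / a n) atTop (nhds 1) := by
  classical
  set α : ℝ := 2 / δ with hα
  have hα2 : (2:ℝ) ≤ α := by
    rw [hα, le_div_iff₀ hδ]; nlinarith
  have hα0 : 0 < α := lt_of_lt_of_le two_pos hα2
  have haint : ∀ n, Integrable (S n) P := fun n =>
    (hmemS n).integrable (by norm_num)
  have ha_mono : Monotone a := by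
    intro m n h
    rw [ha, ha]
    exact integral_mono (haint m) (haint n) (fun ω => hSmono ω h)
  have hex : ∀ j : ℕ, ∃ m, ((j:ℝ) ^ α ≤ a m) ∧ ∀ i < m, ¬ ((j:ℝ) ^ α ≤ a i) := by
    intro j
    have h := (haT.eventually_ge_atTop ((j:ℝ) ^ α)).exists
    exact ⟨Nat.find h, Nat.find_spec h, fun i hi => Nat.find_min h hi⟩
  choose nn hge hmin using hex
  have h_nn_mono : Monotone nn := by
    intro i j h
    by_contra hcon
    push_neg at hcon
    refine hmin i (nn j) hcon ?_
    exact le_trans (Real.rpow_le_rpow (by positivity) (by exact_mod_cast h) hα0.le) (hge j)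
  have hnn0 : nn 0 = 0 := by
    by_contra hcon
    refine hmin 0 0 (Nat.pos_of_ne_zero hcon) ?_
    rw [Nat.cast_zero, Real.zero_rpow hα0.ne', ha0]
  have ha_lower : ∀ j : ℕ, 1 ≤ j → 1 ≤ a (nn j) := by
    intro j hj
    refine le_trans ?_ (hge j)
    exact Real.one_le_rpow (by exact_mod_cast hj) hα0.le
  have ha_upper : ∀ j : ℕ, 1 ≤ j → a (nn j) ≤ (j:ℝ) ^ α + M := by
    intro j hj
    rcases Nat.eq_zero_or_eq_succ_pred (nn j) with h0 | hsucc
    · exfalso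
      have := hge j
      rw [h0, ha0] at this
      have h1 : (1:ℝ) ≤ (j:ℝ) ^ α := Real.one_le_rpow (by exact_mod_cast hj) hα0.le
      linarith
    · set m := (nn j) - 1 with hm
      have hlt : m < nn j := by omega
      have hminj : ¬ ((j:ℝ) ^ α ≤ a m) := hmin j m hlt
      push_neg at hminj
      have heq : nn j = m + 1 := by omega
      rw [heq]
      calc a (m + 1) ≤ a m + M := hstep m
        _ ≤ (j:ℝ) ^ α + M := by linarith [hminj]
  have h_nn_T : Tendsto nn atTop atTop := by
    rw [tendsto_atTop]
    intro N
    have hrT : Tendsto (fun j : ℕ => (j:ℝ) ^ α) atTop atTop :=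
      (tendsto_rpow_atTop hα0).comp tendsto_natCast_atTop_atTop
    filter_upwards [hrT.eventually_gt_atTop (a N)] with j hj
    by_contra h
    push_neg at h
    exact absurd (le_trans (hge j) (ha_mono h.le)) (not_le.mpr hj)
  -- Borel-Cantelli along the subsequence
  have key : ∀ k : ℕ, ∀ᵐ ω ∂P,
      ∀ᶠ j in atTop, |S (nn j) ω - a (nn j)| < (1/((k:ℝ)+1)) * a (nn j) := by
    intro k
    set ε : ℝ := 1/((k:ℝ)+1) with hε
    have hεpos : 0 < ε := by positivity
    set A : ℕ → Set Ω := fun j =>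
      {ω | ε * a (nn j) ≤ |S (nn j) ω - ∫ x, S (nn j) x ∂P|} with hA
    have hbound : ∀ᶠ j in atTop,
        P (A j) ≤ ENNReal.ofReal ((C/ε^2) * (((j:ℝ)^2)⁻¹)) := by
      filter_upwards [eventually_ge_atTop 1, h_nn_T.eventually hvar] with j hj hv
      have ha1 : 1 ≤ a (nn j) := ha_lower j hj
      have hapos : 0 < a (nn j) := by linarith
      have hc : 0 < ε * a (nn j) := by positivity
      refine le_trans (meas_ge_le_variance_div_sq (hmemS (nn j)) hc) ?_
      apply ENNReal.ofReal_le_ofReal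
      have hjα : 0 < (j:ℝ) ^ α :=
        Real.rpow_pos_of_pos (by exact_mod_cast hj) α
      have hj2 : ((j:ℝ)^2 : ℝ) ≤ a (nn j) ^ δ := by
        have h1 : ((j:ℝ) ^ α) ^ δ ≤ a (nn j) ^ δ :=
          Real.rpow_le_rpow hjα.le (hge j) hδ.le
        have h2 : ((j:ℝ) ^ α) ^ δ = (j:ℝ) ^ (2:ℕ) := by
          rw [← Real.rpow_mul (by positivity),
            show α * δ = ((2:ℕ):ℝ) by push_cast; rw [hα]; field_simp,
            Real.rpow_natCast]
        calc ((j:ℝ)^2 : ℝ) = ((j:ℝ) ^ α) ^ δ := h2.symm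
          _ ≤ a (nn j) ^ δ := h1
      have hsplit : a (nn j) ^ (2 - δ) = a (nn j) ^ (2:ℝ) / a (nn j) ^ δ := by
        rw [← Real.rpow_sub hapos]
      have haδ : 0 < a (nn j) ^ δ := Real.rpow_pos_of_pos hapos δ
      have hj2' : 0 < ((j:ℝ)^2 : ℝ) := by positivity
      calc variance (S (nn j)) P / (ε * a (nn j)) ^ 2
          ≤ (C * a (nn j) ^ (2 - δ)) / (ε * a (nn j)) ^ 2 := by
            apply div_le_div_of_nonneg_right ?_ (by positivity)
            · exact hv
        _ = (C/ε^2) * (a (nn j) ^ δ)⁻¹ := by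
            rw [hsplit]
            rw [show a (nn j) ^ (2:ℝ) = a (nn j) ^ (2:ℕ) by
              rw [← Real.rpow_natCast]; norm_num]
            field_simp
        _ ≤ (C/ε^2) * (((j:ℝ)^2)⁻¹) := by
            apply mul_le_mul_of_nonneg_left _ (by positivity)
            exact inv_anti₀ hj2' hj2
    rw [eventually_atTop] at hbound
    obtain ⟨N, hN⟩ := hbound
    have hsum : (∑' j, P (A j)) ≠ ⊤ := by
      rw [← Summable.sum_add_tsum_nat_add' (f := fun j => P (A j)) (k := N) ENNReal.summable]
      apply ne_of_lt
      apply ENNReal.add_lt_top.mpr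
      constructor
      · exact lt_of_le_of_lt (Finset.sum_le_sum fun i _ => prob_le_one)
          (by simpa using ENNReal.natCast_lt_top N)
      · have hle : ∀ j : ℕ, P (A (j + N)) ≤
            ENNReal.ofReal ((C/ε^2) * (((j + N:ℕ):ℝ)^2)⁻¹) := fun j =>
          hN (j + N) (by omega)
        refine lt_of_le_of_lt (ENNReal.tsum_le_tsum hle) ?_
        have hsummable : Summable (fun j : ℕ => (C/ε^2) * (((j + N:ℕ):ℝ)^2)⁻¹) := by
          apply Summable.mul_left
          have : Summable (fun j : ℕ => (((j:ℕ):ℝ)^2)⁻¹) := by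
            have := Real.summable_one_div_nat_pow.mpr (show 1 < 2 by norm_num)
            simpa [one_div] using this
          exact ((summable_nat_add_iff N).mpr this)
        rw [← ENNReal.ofReal_tsum_of_nonneg (fun j => by positivity) hsummable]
        exact ENNReal.ofReal_lt_top
    filter_upwards [ae_eventually_notMem hsum] with ω hω
    filter_upwards [hω] with j hj
    rw [hA] at hj
    simp only [Set.mem_setOf_eq, not_le, ← ha (nn j)] at hj
    exact hj
  -- ratio of consecutive a (nn j) tends to 1
  have hr : Tendsto (fun j => a (nn (j+1)) / a (nn j)) atTop (nhds 1) := by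
    have hRlim : Tendsto
        (fun j : ℕ => (((j:ℝ)+1)/(j:ℝ)) ^ α + M / (j:ℝ) ^ α) atTop (nhds 1) := by
      have h1 : Tendsto (fun j : ℕ => ((j:ℝ)+1)/(j:ℝ)) atTop (nhds 1) := by
        have : (fun j : ℕ => ((j:ℝ)+1)/(j:ℝ)) =ᶠ[atTop]
            (fun j : ℕ => 1 + 1/(j:ℝ)) := by
          filter_upwards [eventually_ge_atTop 1] with j hj
          have : (j:ℝ) ≠ 0 := by positivity
          field_simp
        rw [tendsto_congr' this]
        have := tendsto_one_div_atTop_nhds_zero_nat (𝕜 := ℝ)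
        have h := tendsto_const_nhds (x := (1:ℝ)) (f := atTop (α := ℕ))
        simpa using h.add this
      have h2 : Tendsto (fun j : ℕ => (((j:ℝ)+1)/(j:ℝ)) ^ α) atTop (nhds 1) := by
        have hcont : ContinuousAt (fun x : ℝ => x ^ α) 1 :=
          (Real.continuousAt_rpow_const 1 α (Or.inl one_ne_zero))
        have := hcont.tendsto.comp h1
        simpa [Real.one_rpow, Function.comp_def] using this
      have h3 : Tendsto (fun j : ℕ => M / (j:ℝ) ^ α) atTop (nhds 0) := by
        apply Tendsto.div_atTop tendsto_const_nhds
        exact (tendsto_rpow_atTop hα0).comp tendsto_natCast_atTop_atTop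
      simpa using h2.add h3
    apply tendsto_of_tendsto_of_tendsto_of_le_of_le' tendsto_const_nhds hRlim
    · filter_upwards [eventually_ge_atTop 1] with j hj
      have h1 : 1 ≤ a (nn j) := ha_lower j hj
      have h2 : a (nn j) ≤ a (nn (j+1)) := ha_mono (h_nn_mono (by omega))
      rw [le_div_iff₀ (by linarith)]
      linarith
    · filter_upwards [eventually_ge_atTop 1] with j hj
      have hjα : 0 < (j:ℝ) ^ α := Real.rpow_pos_of_pos (by exact_mod_cast hj) α
      have h1 : a (nn (j+1)) ≤ ((j:ℝ)+1) ^ α + M := by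
        have := ha_upper (j+1) (by omega)
        push_cast at this
        exact this
      have h2 : (((j:ℝ)+1)/(j:ℝ)) ^ α + M / (j:ℝ) ^ α
          = (((j:ℝ)+1) ^ α + M) / (j:ℝ) ^ α := by
        rw [Real.div_rpow (by positivity) (by positivity)]
        field_simp
      rw [h2]
      exact div_le_div₀ (by positivity) h1 hjα (hge j)
  -- main a.e. argument
  have keyall : ∀ᵐ ω ∂P, ∀ k : ℕ,
      ∀ᶠ j in atTop, |S (nn j) ω - a (nn j)| < (1/((k:ℝ)+1)) * a (nn j) :=
    (ae_all_iff).mpr key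
  filter_upwards [keyall] with ω hω
  -- convergence along the subsequence
  have hsub : Tendsto (fun j => S (nn j) ω / a (nn j)) atTop (nhds 1) := by
    rw [Metric.tendsto_atTop]
    intro ε hε
    obtain ⟨k, hk⟩ := exists_nat_one_div_lt hε
    have h := hω k
    rw [eventually_atTop] at h
    obtain ⟨N, hN⟩ := h
    refine ⟨max N 1, fun j hj => ?_⟩
    have hj1 : 1 ≤ j := le_trans (le_max_right N 1) hj
    have hjN : N ≤ j := le_trans (le_max_left N 1) hj
    have ha1 : 1 ≤ a (nn j) := ha_lower j hj1
    have hapos : 0 < a (nn j) := by linarith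
    have hest := hN j hjN
    rw [Real.dist_eq]
    have : S (nn j) ω / a (nn j) - 1 = (S (nn j) ω - a (nn j)) / a (nn j) := by
      field_simp
    rw [this, abs_div, abs_of_pos hapos, div_lt_iff₀ hapos]
    calc |S (nn j) ω - a (nn j)| < (1/((k:ℝ)+1)) * a (nn j) := hest
      _ ≤ ε * a (nn j) := by
          apply mul_le_mul_of_nonneg_right _ hapos.le
          push_cast at hk ⊢
          linarith
  have hsub' : Tendsto (fun j => S (nn (j+1)) ω / a (nn (j+1))) atTop (nhds 1) :=
    hsub.comp (tendsto_add_atTop_nat 1)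
  -- upper and lower comparison sequences
  have hu : Tendsto (fun j => S (nn (j+1)) ω / a (nn j)) atTop (nhds 1) := by
    have heq : (fun j => (S (nn (j+1)) ω / a (nn (j+1))) * (a (nn (j+1)) / a (nn j)))
        =ᶠ[atTop] (fun j => S (nn (j+1)) ω / a (nn j)) := by
      filter_upwards [eventually_ge_atTop 1] with j hj
      have h1 : (0:ℝ) < a (nn (j+1)) := by
        have := ha_lower (j+1) (by omega); linarith
      field_simp
    have := hsub'.mul hr
    rw [mul_one] at this
    exact this.congr' heq
  have hl : Tendsto (fun j => S (nn j) ω / a (nn (j+1))) atTop (nhds 1) := by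
    have hrinv : Tendsto (fun j => a (nn j) / a (nn (j+1))) atTop (nhds 1) := by
      have := hr.inv₀ (one_ne_zero)
      simp only [inv_one] at this
      apply this.congr'
      filter_upwards [eventually_ge_atTop 1] with j hj
      have h1 : (0:ℝ) < a (nn j) := by have := ha_lower j hj; linarith
      have h2 : (0:ℝ) < a (nn (j+1)) := by have := ha_lower (j+1) (by omega); linarith
      rw [inv_div]
    have heq : (fun j => (S (nn j) ω / a (nn j)) * (a (nn j) / a (nn (j+1))))
        =ᶠ[atTop] (fun j => S (nn j) ω / a (nn (j+1))) := by
      filter_upwards [eventually_ge_atTop 1] with j hj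
      have h1 : (0:ℝ) < a (nn j) := by have := ha_lower j hj; linarith
      field_simp
    have := hsub.mul hrinv
    rw [mul_one] at this
    exact this.congr' heq
  -- the index function jj
  set jj : ℕ → ℕ := fun n => Nat.findGreatest (fun j => nn j ≤ n) ⌈a n⌉₊ with hjj
  have hP0 : ∀ n, nn 0 ≤ n := fun n => by rw [hnn0]; exact Nat.zero_le n
  have hjjle : ∀ n, nn (jj n) ≤ n := fun n =>
    Nat.findGreatest_spec (P := fun j => nn j ≤ n) (Nat.zero_le _) (hP0 n)
  have hBnd : ∀ n j, 1 ≤ j → nn j ≤ n → j ≤ ⌈a n⌉₊ := by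
    intro n j hj hle
    have h1 : (j:ℝ) ≤ (j:ℝ) ^ α := by
      nth_rewrite 1 [← Real.rpow_one (j:ℝ)]
      exact Real.rpow_le_rpow_of_exponent_le (by exact_mod_cast hj) (by linarith)
    have h2 : (j:ℝ) ≤ a n := le_trans h1 (le_trans (hge j) (ha_mono hle))
    have h3 : (j:ℝ) ≤ (⌈a n⌉₊ : ℝ) := le_trans h2 (Nat.le_ceil _)
    exact_mod_cast h3
  have hjjgt : ∀ n, n < nn (jj n + 1) := by
    intro n
    by_contra h
    push_neg at h
    have hb : jj n + 1 ≤ ⌈a n⌉₊ := hBnd n (jj n + 1) (by omega) h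
    exact Nat.findGreatest_is_greatest (lt_add_one (jj n)) hb h
  have hjjT : Tendsto jj atTop atTop := by
    rw [tendsto_atTop]
    intro J
    rcases Nat.eq_zero_or_pos J with h0 | hJpos
    · filter_upwards with n; omega
    · filter_upwards [eventually_ge_atTop (nn J)] with n hn
      exact Nat.le_findGreatest (hBnd n J hJpos hn) hn
  -- squeeze
  have hlow : ∀ᶠ n in atTop,
      (fun j => S (nn j) ω / a (nn (j+1))) (jj n) ≤ S n ω / a n := by
    filter_upwards [hjjT.eventually_ge_atTop 1] with n hn
    have h1 : (0:ℝ) < a n := by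
      have := ha_lower (jj n) hn
      have := ha_mono (hjjle n)
      linarith
    exact div_le_div₀ (hSnonneg n ω) (hSmono ω (hjjle n)) h1
      (ha_mono (hjjgt n).le)
  have hupp : ∀ᶠ n in atTop,
      S n ω / a n ≤ (fun j => S (nn (j+1)) ω / a (nn j)) (jj n) := by
    filter_upwards [hjjT.eventually_ge_atTop 1] with n hn
    have h1 : (0:ℝ) < a (nn (jj n)) := by
      have := ha_lower (jj n) hn; linarith
    exact div_le_div₀ (hSnonneg _ ω) (hSmono ω (hjjgt n).le) h1 (ha_mono (hjjle n))
  exact tendsto_of_tendsto_of_tendsto_of_le_of_le' (hl.comp hjjT) (hu.comp hjjT)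
    hlow hupp

set_option maxHeartbeats 1600000 in
theorem SLLN_variance_condition
    {Ω : Type*} [MeasurableSpace Ω] (P : Measure Ω) [IsProbabilityMeasure P]
    (Y : ℕ → Ω → ℝ) (hmeas : ∀ n, Measurable (Y n))
    (hnonneg : ∀ n ω, 0 ≤ Y n ω) (hL2 : ∀ n, MemLp (Y n) 2 P)
    (S : ℕ → Ω → ℝ) (hS : ∀ n ω, S n ω = ∑ k ∈ Finset.Icc 1 n, Y k ω)
    (hES : Tendsto (fun n => ∫ ω, S n ω ∂P) atTop atTop)
    (hEY : ∃ M : ℝ, ∀ n, ∫ ω, Y n ω ∂P ≤ M)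
    (δ C : ℝ) (hδ : 0 < δ) (hC : 0 < C)
    (hvar : ∀ᶠ n in atTop,
      variance (S n) P ≤ C * (∫ ω, S n ω ∂P) ^ (2 - δ)) :
    ∀ᵐ ω ∂P, Tendsto (fun n => S n ω / ∫ ω', S n ω' ∂P) atTop (nhds 1) := by
  obtain ⟨M, hM⟩ := hEY
  have haintY : ∀ n, Integrable (Y n) P := fun n => (hL2 n).integrable (by norm_num)
  have hmemS : ∀ n, MemLp (S n) 2 P := by
    intro n
    have h : S n = fun ω => ∑ k ∈ Finset.Icc 1 n, Y k ω := funext (hS n)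
    rw [h]
    exact memLp_finset_sum _ (fun k _ => hL2 k)
  have haintS : ∀ n, Integrable (S n) P := fun n => (hmemS n).integrable (by norm_num)
  have hSmono : ∀ ω, Monotone (fun n => S n ω) := by
    intro ω
    apply monotone_nat_of_le_succ
    intro n
    simp only [hS]
    apply Finset.sum_le_sum_of_subset_of_nonneg
    · exact Finset.Icc_subset_Icc_right (by omega)
    · intro k _ _
      exact hnonneg k ω
  have hSnonneg : ∀ n ω, 0 ≤ S n ω := by
    intro n ω
    rw [hS]
    exact Finset.sum_nonneg fun k _ => hnonneg k ω
  set a : ℕ → ℝ := fun n => ∫ ω, S n ω ∂P with ha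
  have ha0 : a 0 = 0 := by
    have h : S 0 = fun _ => (0:ℝ) := by
      funext ω
      rw [hS]
      simp
    simp only [ha, h, integral_const, smul_zero]
  have hSstep : ∀ n ω, S (n+1) ω = S n ω + Y (n+1) ω := by
    intro n ω
    rw [hS, hS, Finset.sum_Icc_succ_top (Nat.succ_le_succ (Nat.zero_le n))]
  have hstep : ∀ n, a (n+1) ≤ a n + M := by
    intro n
    have h : a (n+1) = a n + ∫ ω, Y (n+1) ω ∂P := by
      show (∫ ω, S (n+1) ω ∂P) = _
      calc ∫ ω, S (n+1) ω ∂P = ∫ ω, (S n ω + Y (n+1) ω) ∂P := by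
            apply integral_congr_ae
            filter_upwards with ω
            rw [hSstep]
        _ = _ := integral_add (haintS n) (haintY (n+1))
    rw [h]
    exact add_le_add_right (hM (n+1)) _
  have hM0 : 0 ≤ M := le_trans (integral_nonneg (fun ω => hnonneg 0 ω)) (hM 0)
  set δ' := min δ 1 with hδ'def
  have hδ' : 0 < δ' := lt_min hδ one_pos
  have hδ'1 : δ' ≤ 1 := min_le_right _ _
  have hvar' : ∀ᶠ n in atTop, variance (S n) P ≤ C * a n ^ (2 - δ') := by
    filter_upwards [hvar, hES.eventually_ge_atTop 1] with n h1 h2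
    refine le_trans h1 ?_
    refine mul_le_mul_of_nonneg_left ?_ hC.le
    exact Real.rpow_le_rpow_of_exponent_le h2
      (by linarith [min_le_left δ 1])
  exact SLLN_aux P S a M δ' C hmemS hSmono hSnonneg (fun n => rfl) ha0 hES hM0
    hstep hδ' hδ'1 hC hvar'
end

section
/- Let (Y_n)_{n≥1} be a sequence of nonnegative random variables on a probability space (Ω, P) and set S_n = Σ_{k=1}^n Y_k. Suppose E[S_n] → ∞ as n → ∞, sup_{n≥1} E[Y_n] < ∞, and there exist δ > 0 and C > 0 such that Var(S_n) ≤ C·(E[S_n])^{2−δ} for all sufficiently large n. Then for every fixed β ∈ (0, δ/3), almost surely limsup_{n→∞} (E[S_n])^β · |S_n/E[S_n] − 1| < ∞. -/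
open MeasureTheory ProbabilityTheory Filter

lemma aux_bernoulli {β x : ℝ} (hβ : 0 < β) (hx0 : 0 ≤ x) (hx1 : x ≤ 1) :
    1 + β / 2 * x ≤ (1 + x) ^ β := by
  have h1 : (0:ℝ) < 1 + x := by linarith
  have hlog : x / 2 ≤ Real.log (1 + x) := by
    have h2 := Real.log_le_sub_one_of_pos (inv_pos.2 h1)
    rw [Real.log_inv] at h2
    have h3 : x / (1 + x) ≤ Real.log (1 + x) := by
      have : (1 + x)⁻¹ - 1 = -(x / (1 + x)) := by field_simp; ring
      linarith [this ▸ h2]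
    have h4 : x / 2 ≤ x / (1 + x) := by
      rcases eq_or_lt_of_le hx0 with h|h
      · simp [← h]
      · rw [div_le_div_iff₀ (by norm_num) h1]; nlinarith
    linarith
  calc 1 + β / 2 * x = 1 + β * (x / 2) := by ring
    _ ≤ 1 + β * Real.log (1 + x) := by nlinarith
    _ ≤ Real.exp (β * Real.log (1 + x)) := by linarith [Real.add_one_le_exp (β * Real.log (1 + x))]
    _ = (1 + x) ^ β := by rw [Real.rpow_def_of_pos h1, mul_comm]

theorem SLLN_variance_condition_rate
    {Ω : Type*} [MeasurableSpace Ω] (P : Measure Ω) [IsProbabilityMeasure P]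
    (Y : ℕ → Ω → ℝ) (hmeas : ∀ n, Measurable (Y n))
    (hnonneg : ∀ n ω, 0 ≤ Y n ω) (hL2 : ∀ n, MemLp (Y n) 2 P)
    (S : ℕ → Ω → ℝ) (hS : ∀ n ω, S n ω = ∑ k ∈ Finset.Icc 1 n, Y k ω)
    (hES : Tendsto (fun n => ∫ ω, S n ω ∂P) atTop atTop)
    (hEY : ∃ M : ℝ, ∀ n, ∫ ω, Y n ω ∂P ≤ M)
    (δ C : ℝ) (hδ : 0 < δ) (hC : 0 < C)
    (hvar : ∀ᶠ n in atTop,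
      variance (S n) P ≤ C * (∫ ω, S n ω ∂P) ^ (2 - δ))
    (β : ℝ) (hβ : β ∈ Set.Ioo 0 (δ / 3)) :
    ∀ᵐ ω ∂P, ∃ M : ℝ, ∀ᶠ n in atTop,
      (∫ ω', S n ω' ∂P) ^ β * |S n ω / ∫ ω', S n ω' ∂P - 1| ≤ M := by
  obtain ⟨hβ0, hβδ⟩ := hβ
  have h3β : 3 * β < δ := by have := (lt_div_iff₀ (by norm_num : (0:ℝ) < 3)).1 hβδ; linarith
  set a : ℕ → ℝ := fun n => ∫ ω, S n ω ∂P with ha_def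
  -- basic facts about S and a
  have hSmem : ∀ n, MemLp (S n) 2 P := by
    intro n
    have : S n = fun ω => ∑ k ∈ Finset.Icc 1 n, Y k ω := funext (hS n)
    rw [this]
    exact memLp_finset_sum _ (fun i _ => hL2 i)
  have hSint : ∀ n, Integrable (S n) P :=
    fun n => (hSmem n).integrable (by norm_num)
  have hSmono : ∀ {m n : ℕ}, m ≤ n → ∀ ω, S m ω ≤ S n ω := by
    intro m n hmn ω
    rw [hS m ω, hS n ω]
    exact Finset.sum_le_sum_of_subset_of_nonneg
      (Finset.Icc_subset_Icc_right hmn) (fun i _ _ => hnonneg i ω)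
  have haMono : Monotone a :=
    fun m n h => integral_mono (hSint m) (hSint n) (fun ω => hSmono h ω)
  have hex : ∀ T : ℝ, ∃ n, T ≤ a n := fun T => (hES.eventually_ge_atTop T).exists
  -- checkpoints
  have hex' : ∀ m : ℕ, ∃ n, a m + a m ^ (1 - β) ≤ a n := fun m => hex _
  set c : ℕ → ℕ := fun k => (fun m => Nat.find (hex' m))^[k] (Nat.find (hex 1)) with hc_def
  have hc0 : (1:ℝ) ≤ a (c 0) := Nat.find_spec (hex 1)
  have hcs : ∀ k, c (k+1) = Nat.find (hex' (c k)) := by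
    intro k
    simp only [hc_def, Function.iterate_succ_apply']
  have hstep : ∀ k, a (c k) + a (c k) ^ (1 - β) ≤ a (c (k+1)) := by
    intro k; rw [hcs k]; exact Nat.find_spec (hex' (c k))
  have hmin : ∀ k n, n < c (k+1) → a n < a (c k) + a (c k) ^ (1 - β) := by
    intro k n hn
    rw [hcs k] at hn
    exact lt_of_not_ge (Nat.find_min (hex' (c k)) hn)
  have hb1 : ∀ k, (1:ℝ) ≤ a (c k) := by
    intro k
    induction k with
    | zero => exact hc0
    | succ k ih =>
      have ht : 0 < a (c k) ^ (1 - β) :=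
        Real.rpow_pos_of_pos (lt_of_lt_of_le one_pos ih) _
      linarith [hstep k]
  have hbpos : ∀ k, (0:ℝ) < a (c k) := fun k => lt_of_lt_of_le one_pos (hb1 k)
  have htpos : ∀ k, (0:ℝ) < a (c k) ^ (1 - β) :=
    fun k => Real.rpow_pos_of_pos (hbpos k) _
  have hclt : ∀ k, c k < c (k+1) := by
    intro k
    by_contra h
    push_neg at h
    have := haMono h
    linarith [hstep k, htpos k]
  have hcge : ∀ k, k ≤ c k := by
    intro k
    induction k with
    | zero => exact Nat.zero_le _
    | succ k ih => exact Nat.succ_le_of_lt (lt_of_le_of_lt ih (hclt k))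
  have htle : ∀ k, a (c k) ^ (1 - β) ≤ a (c k) := by
    intro k
    calc a (c k) ^ (1 - β) ≤ a (c k) ^ (1:ℝ) :=
          Real.rpow_le_rpow_of_exponent_le (hb1 k) (by linarith)
      _ = a (c k) := Real.rpow_one _
  -- growth of a (c k)
  have hu : ∀ k : ℕ, 1 + k * (β / 2) ≤ a (c k) ^ β := by
    intro k
    induction k with
    | zero =>
      simp only [Nat.cast_zero, zero_mul, add_zero]
      calc (1:ℝ) = 1 ^ β := (Real.one_rpow β).symm
        _ ≤ a (c 0) ^ β := Real.rpow_le_rpow zero_le_one hc0 hβ0.le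
    | succ k ih =>
      have hbk := hbpos k
      have hfac : a (c k) + a (c k) ^ (1 - β) = a (c k) * (1 + a (c k) ^ (-β)) := by
        have h5 : a (c k) ^ (1 - β) = a (c k) ^ (1:ℝ) * a (c k) ^ (-β) := by
          rw [← Real.rpow_add hbk]; ring_nf
        rw [h5, Real.rpow_one]; ring
      have hxle : a (c k) ^ (-β) ≤ 1 :=
        Real.rpow_le_one_of_one_le_of_nonpos (hb1 k) (by linarith)
      have hx0 : (0:ℝ) < a (c k) ^ (-β) := Real.rpow_pos_of_pos hbk _
      have h1 : (a (c k) * (1 + a (c k) ^ (-β))) ^ β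
          = a (c k) ^ β * (1 + a (c k) ^ (-β)) ^ β :=
        Real.mul_rpow hbk.le (by linarith)
      have h2 : 1 + β / 2 * a (c k) ^ (-β) ≤ (1 + a (c k) ^ (-β)) ^ β :=
        aux_bernoulli hβ0 hx0.le hxle
      have h3 : a (c k) ^ β * a (c k) ^ (-β) = 1 := by
        rw [← Real.rpow_add hbk]; simp
      have h4 : (1:ℝ) ≤ a (c k) ^ β := by
        have : (0:ℝ) ≤ (k:ℝ) * (β/2) := by positivity
        linarith
      have h6 : (a (c k) * (1 + a (c k) ^ (-β))) ^ β ≤ a (c (k+1)) ^ β := by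
        apply Real.rpow_le_rpow (by positivity) _ hβ0.le
        rw [← hfac]; exact hstep k
      have h7 : a (c k) ^ β + β / 2 ≤ a (c (k+1)) ^ β := by
        have := mul_le_mul_of_nonneg_left h2 (le_trans zero_le_one h4)
        rw [mul_add, mul_one] at this
        have h8 : a (c k) ^ β * (β / 2 * a (c k) ^ (-β)) = β / 2 := by
          rw [show a (c k) ^ β * (β / 2 * a (c k) ^ (-β))
              = β / 2 * (a (c k) ^ β * a (c k) ^ (-β)) by ring, h3, mul_one]
        rw [h8] at this
        calc a (c k) ^ β + β / 2 ≤ a (c k) ^ β * (1 + a (c k) ^ (-β)) ^ β := this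
          _ = (a (c k) * (1 + a (c k) ^ (-β))) ^ β := h1.symm
          _ ≤ a (c (k+1)) ^ β := h6
      push_cast
      push_cast at ih
      linarith
  -- Chebyshev bound
  obtain ⟨N₀, hN₀⟩ := eventually_atTop.1 hvar
  have hq : 2 * β - δ < -β := by linarith
  set D : ℕ → Set Ω := fun n => {ω | a n ^ (1 - β) ≤ |S n ω - a n|} with hD_def
  have key : ∀ k m, c k ≤ m → N₀ ≤ m →
      P (D m) ≤ ENNReal.ofReal (C * a (c k) ^ (2 * β - δ)) := by
    intro k m hcm hNm
    have ham : (1:ℝ) ≤ a m := le_trans (hb1 k) (haMono hcm)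
    have ham0 : (0:ℝ) < a m := lt_of_lt_of_le one_pos ham
    have htm : (0:ℝ) < a m ^ (1 - β) := Real.rpow_pos_of_pos ham0 _
    have hch : P {ω | a m ^ (1 - β) ≤ |S m ω - a m|} ≤
        ENNReal.ofReal (variance (S m) P / (a m ^ (1 - β)) ^ 2) :=
      meas_ge_le_variance_div_sq (hSmem m) htm
    refine le_trans hch (ENNReal.ofReal_le_ofReal ?_)
    have hvm : variance (S m) P ≤ C * a m ^ (2 - δ) := hN₀ m hNm
    have hsq : (a m ^ (1 - β)) ^ 2 = a m ^ (2 - 2 * β) := by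
      rw [← Real.rpow_natCast (a m ^ (1 - β)) 2, ← Real.rpow_mul ham0.le]
      norm_num; ring_nf
    have hstep1 : variance (S m) P / (a m ^ (1 - β)) ^ 2 ≤ C * a m ^ (2 * β - δ) := by
      rw [hsq, div_le_iff₀ (Real.rpow_pos_of_pos ham0 _)]
      calc variance (S m) P ≤ C * a m ^ (2 - δ) := hvm
        _ = C * a m ^ (2 * β - δ) * a m ^ (2 - 2 * β) := by
            rw [mul_assoc, ← Real.rpow_add ham0]; ring_nf
    refine le_trans hstep1 ?_
    have : a m ^ (2 * β - δ) ≤ a (c k) ^ (2 * β - δ) :=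
      Real.rpow_le_rpow_of_nonpos (hbpos k) (haMono hcm) (by linarith)
    nlinarith
  -- bad events and summability
  set Bad : ℕ → Set Ω := fun k => D (c k) ∪ D (c (k+1) - 1) with hBad_def
  have hck1 : ∀ k, c k ≤ c (k+1) - 1 := fun k => Nat.le_sub_one_of_lt (hclt k)
  have hBadle : ∀ k, N₀ ≤ k →
      P (Bad k) ≤ ENNReal.ofReal (2 * C * a (c k) ^ (2 * β - δ)) := by
    intro k hk
    have hNck : N₀ ≤ c k := le_trans hk (hcge k)
    have h1 := key k (c k) le_rfl hNck
    have h2 := key k (c (k+1) - 1) (hck1 k) (le_trans hNck (hck1 k))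
    calc P (Bad k) ≤ P (D (c k)) + P (D (c (k+1) - 1)) := measure_union_le _ _
      _ ≤ ENNReal.ofReal (C * a (c k) ^ (2 * β - δ))
          + ENNReal.ofReal (C * a (c k) ^ (2 * β - δ)) := add_le_add h1 h2
      _ = ENNReal.ofReal (2 * C * a (c k) ^ (2 * β - δ)) := by
          have hnn : (0:ℝ) ≤ C * a (c k) ^ (2 * β - δ) :=
            mul_nonneg hC.le (Real.rpow_pos_of_pos (hbpos k) _).le
          rw [← ENNReal.ofReal_add hnn hnn]; ring_nf
  -- summable majorant
  set q : ℝ := (2 * β - δ) / β with hq_def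
  have hqlt : q < -1 := by
    rw [hq_def, div_lt_iff₀ hβ0]
    linarith
  have hgh : ∀ k : ℕ, 2 * C * a (c k) ^ (2 * β - δ)
      ≤ 2 * C * (1 + k * (β / 2)) ^ q := by
    intro k
    have h1 : a (c k) ^ (2 * β - δ) = (a (c k) ^ β) ^ q := by
      rw [← Real.rpow_mul (hbpos k).le, hq_def]
      field_simp
    have h2 : (0:ℝ) < 1 + k * (β / 2) := by positivity
    have h3 : (a (c k) ^ β) ^ q ≤ (1 + k * (β / 2)) ^ q :=
      Real.rpow_le_rpow_of_nonpos h2 (hu k) (by linarith)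
    rw [h1]
    nlinarith
  have hsummant : Summable (fun k : ℕ => 2 * C * (1 + k * (β / 2)) ^ q) := by
    apply Summable.mul_left
    set m : ℝ := min 1 (β / 2) with hm_def
    have hm0 : 0 < m := lt_min one_pos (by linarith)
    have hcomp : ∀ k : ℕ, (1 + k * (β / 2)) ^ q ≤ m ^ q * ((k:ℝ) + 1) ^ q := by
      intro k
      have h1 : ((k:ℝ) + 1) * m ≤ 1 + k * (β / 2) := by
        have hk0 : (0:ℝ) ≤ k := Nat.cast_nonneg k
        have hm1 : m ≤ 1 := min_le_left _ _
        have hm2 : m ≤ β / 2 := min_le_right _ _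
        nlinarith
      have h2 : (0:ℝ) < ((k:ℝ) + 1) * m := by positivity
      calc (1 + k * (β / 2)) ^ q ≤ (((k:ℝ) + 1) * m) ^ q :=
          Real.rpow_le_rpow_of_nonpos h2 h1 (by linarith)
        _ = ((k:ℝ) + 1) ^ q * m ^ q := Real.mul_rpow (by positivity) hm0.le
        _ = m ^ q * ((k:ℝ) + 1) ^ q := by ring
    have hsum2 : Summable (fun k : ℕ => ((k:ℝ) + 1) ^ q) := by
      have := (summable_nat_add_iff 1).2 (Real.summable_nat_rpow.2 hqlt)
      refine this.congr fun k => ?_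
      push_cast
      rfl
    refine Summable.of_nonneg_of_le (fun k => by positivity) hcomp (hsum2.mul_left _)
  have hfin : (∑' k : ℕ, P (Bad (k + N₀))) ≠ ⊤ := by
    have hle : ∀ k : ℕ, P (Bad (k + N₀)) ≤
        ENNReal.ofReal (2 * C * (1 + (k + N₀ : ℕ) * (β / 2)) ^ q) := by
      intro k
      exact le_trans (hBadle (k + N₀) (Nat.le_add_left _ _))
        (ENNReal.ofReal_le_ofReal (hgh (k + N₀)))
    have hsum3 : Summable (fun k : ℕ => 2 * C * (1 + ((k + N₀ : ℕ):ℝ) * (β / 2)) ^ q) :=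
      hsummant.comp_injective (add_left_injective N₀)
    have hcalc : (∑' k : ℕ, P (Bad (k + N₀)))
        ≤ ENNReal.ofReal (∑' k : ℕ, 2 * C * (1 + ((k + N₀ : ℕ):ℝ) * (β / 2)) ^ q) := by
      calc (∑' k : ℕ, P (Bad (k + N₀)))
          ≤ ∑' k : ℕ, ENNReal.ofReal (2 * C * (1 + ((k + N₀ : ℕ):ℝ) * (β / 2)) ^ q) :=
            ENNReal.tsum_le_tsum hle
        _ = ENNReal.ofReal (∑' k : ℕ, 2 * C * (1 + ((k + N₀ : ℕ):ℝ) * (β / 2)) ^ q) :=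
          (ENNReal.ofReal_tsum_of_nonneg (fun k => by positivity) hsum3).symm
    exact ne_top_of_le_ne_top ENNReal.ofReal_ne_top hcalc
  have hae := MeasureTheory.ae_eventually_notMem hfin
  -- pointwise conclusion
  filter_upwards [hae] with ω hω
  obtain ⟨K, hK⟩ := eventually_atTop.1 hω
  refine ⟨3 * 2 ^ β, eventually_atTop.2 ⟨c (K + N₀), fun n hn => ?_⟩⟩
  have hK'n : K + N₀ ≤ n := le_trans (hcge (K + N₀)) hn
  set k := Nat.findGreatest (fun j => c j ≤ n) n with hk_def
  have hkK : K + N₀ ≤ k := Nat.le_findGreatest hK'n hn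
  have hckn : c k ≤ n := Nat.findGreatest_spec (P := fun j => c j ≤ n) hK'n hn
  have hnlt : n < c (k + 1) := by
    by_contra h
    push_neg at h
    exact Nat.findGreatest_is_greatest (P := fun j => c j ≤ n) (Nat.lt_succ_self k)
      (le_trans (hcge (k + 1)) h) h
  have hnotbad : ω ∉ Bad k := by
    have h1 : K ≤ k - N₀ := by omega
    have h2 : (k - N₀) + N₀ = k := by omega
    have := hK (k - N₀) h1
    rwa [h2] at this
  rw [hBad_def] at hnotbad
  simp only [Set.mem_union, not_or, hD_def, Set.mem_setOf_eq, not_le] at hnotbad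
  obtain ⟨hD1, hD2⟩ := hnotbad
  -- notation
  set x := a (c k) with hx_def
  set t := x ^ (1 - β) with ht_def
  set p := c (k + 1) - 1 with hp_def
  set y := a p with hy_def
  have hx1 : (1:ℝ) ≤ x := hb1 k
  have hx0 : (0:ℝ) < x := hbpos k
  have ht0 : (0:ℝ) < t := htpos k
  have htx : t ≤ x := htle k
  have hnp : n ≤ p := Nat.le_sub_one_of_lt hnlt
  have hcp : c k ≤ p := hck1 k
  have hxy : x ≤ y := haMono hcp
  have hplt : p < c (k + 1) := by
    have := hclt k
    omega
  have hylt : y < x + t := hmin k p hplt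
  have han_low : x ≤ a n := haMono hckn
  have han_high : a n ≤ y := haMono hnp
  have han0 : (0:ℝ) < a n := lt_of_lt_of_le hx0 han_low
  -- y^(1-β) ≤ 2 t
  have hty : y ^ (1 - β) ≤ 2 * t := by
    rcases le_or_gt β 1 with hb | hb
    · calc y ^ (1 - β) ≤ (2 * x) ^ (1 - β) :=
          Real.rpow_le_rpow (le_trans hx0.le hxy) (by linarith) (by linarith)
        _ = 2 ^ (1 - β) * x ^ (1 - β) := Real.mul_rpow (by norm_num) hx0.le
        _ ≤ 2 ^ (1:ℝ) * t := by
            refine mul_le_mul_of_nonneg_right ?_ ht0.le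
            exact Real.rpow_le_rpow_of_exponent_le one_le_two (by linarith)
        _ = 2 * t := by rw [Real.rpow_one]
    · have : y ^ (1 - β) ≤ x ^ (1 - β) :=
        Real.rpow_le_rpow_of_nonpos hx0 hxy (by linarith)
      linarith
  -- bounds on S n ω
  have hS_up : S n ω ≤ x + 3 * t := by
    have h1 : S n ω ≤ S p ω := hSmono hnp ω
    have h2 : S p ω < y + y ^ (1 - β) := by
      have := (abs_lt.1 hD2).2
      linarith
    linarith
  have hS_low : x - t ≤ S n ω := by
    have h1 : S (c k) ω ≤ S n ω := hSmono hckn ω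
    have h2 : x - t < S (c k) ω := by
      have := (abs_lt.1 hD1).1
      linarith
    linarith
  have hdiff : |S n ω - a n| ≤ 3 * t := by
    rw [abs_le]
    constructor
    · linarith
    · linarith
  -- final algebra
  have heq0 : (∫ ω', S n ω' ∂P) = a n := rfl
  rw [heq0]
  have heq1 : S n ω / a n - 1 = (S n ω - a n) / a n := by
    field_simp
  rw [heq1, abs_div, abs_of_pos han0]
  have heq2 : a n ^ β * (|S n ω - a n| / a n) = a n ^ (β - 1) * |S n ω - a n| := by
    rw [Real.rpow_sub han0, Real.rpow_one]
    ring
  rw [heq2]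
  have hkey : a n ^ (β - 1) * t ≤ 2 ^ β := by
    have hrw : a n ^ (β - 1) * t = (a n / x) ^ (β - 1) := by
      rw [Real.div_rpow han0.le hx0.le, ht_def]
      rw [show (1 - β) = -(β - 1) by ring, Real.rpow_neg hx0.le]
      rw [div_eq_mul_inv]
    have hr1 : (1:ℝ) ≤ a n / x := (one_le_div hx0).2 han_low
    have hr2 : a n / x ≤ 2 := by
      rw [div_le_iff₀ hx0]
      linarith
    rw [hrw]
    rcases le_or_gt 1 β with hb | hb
    · calc (a n / x) ^ (β - 1) ≤ 2 ^ (β - 1) :=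
          Real.rpow_le_rpow (by linarith) hr2 (by linarith)
        _ ≤ 2 ^ β := Real.rpow_le_rpow_of_exponent_le one_le_two (by linarith)
    · calc (a n / x) ^ (β - 1) ≤ 1 :=
          Real.rpow_le_one_of_one_le_of_nonpos hr1 (by linarith)
        _ = 2 ^ (0:ℝ) := (Real.rpow_zero 2).symm
        _ ≤ 2 ^ β := Real.rpow_le_rpow_of_exponent_le one_le_two hβ0.le
  have hpow0 : (0:ℝ) ≤ a n ^ (β - 1) := (Real.rpow_pos_of_pos han0 _).le
  calc a n ^ (β - 1) * |S n ω - a n| ≤ a n ^ (β - 1) * (3 * t) :=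
      mul_le_mul_of_nonneg_left hdiff hpow0
    _ = 3 * (a n ^ (β - 1) * t) := by ring
    _ ≤ 3 * 2 ^ β := by linarith
end
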